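/- There exists a convex function f ∈ C²(ℝ; ℝ) such that (i) x²/2 ≤ f(x) ≤ C(x² + 1) and |f'(x)| ≤ C(1 + |x|) for all x ∈ ℝ and some constant C > 0, but (ii) for every constant C' > 0 and every s ≥ 0 the bound |f''(x)| ≤ C'(1 + |x|^s) fails, i.e. f'' grows faster than any polynomial along some sequence xₖ → ∞. -/

import Mathlib

open Real Set

lemma glue_mono : Monotone expNegInvGlue := by
  intro x y hxy
  rcases le_or_gt x 0 with hx | hx
  · rw [expNegInvGlue.zero_of_nonpos hx]; exact expNegInvGlue.nonneg y
  · have hy : 0 < y := hx.trans_le hxy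
    simp only [expNegInvGlue, if_neg hx.not_ge, if_neg hy.not_ge]
    apply Real.exp_le_exp.2
    simp only [neg_le_neg_iff]
    exact inv_anti₀ hx hxy

lemma st_mono : Monotone Real.smoothTransition := by
  intro x y hxy
  unfold Real.smoothTransition
  rw [div_le_div_iff₀ (Real.smoothTransition.pos_denom x) (Real.smoothTransition.pos_denom y)]
  have h1 : expNegInvGlue x ≤ expNegInvGlue y := glue_mono hxy
  have h2 : expNegInvGlue (1 - y) ≤ expNegInvGlue (1 - x) := glue_mono (by linarith)
  nlinarith [expNegInvGlue.nonneg x, expNegInvGlue.nonneg (1 - y)]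
open Real Set

noncomputable def sg (k : ℕ) (x : ℝ) : ℝ := Real.smoothTransition (Real.exp ((k:ℝ)^2) * (x - k))

noncomputable def eps (x : ℝ) : ℝ := ∑' k : ℕ, sg k x

lemma sg_zero {k : ℕ} {x : ℝ} (h : x ≤ k) : sg k x = 0 :=
  Real.smoothTransition.zero_of_nonpos (by
    have := Real.exp_pos ((k:ℝ)^2)
    nlinarith)

lemma sg_one {k : ℕ} {x : ℝ} (h : (k:ℝ) + 1 ≤ x) : sg k x = 1 :=
  Real.smoothTransition.one_of_one_le (by
    have h1 : (1:ℝ) ≤ Real.exp ((k:ℝ)^2) := Real.one_le_exp (by positivity)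
    nlinarith)

lemma sg_contDiff (k : ℕ) : ContDiff ℝ 2 (sg k) :=
  Real.smoothTransition.contDiff.comp ((contDiff_const.mul (contDiff_id.sub contDiff_const)))

lemma sg_nonneg (k : ℕ) (x : ℝ) : 0 ≤ sg k x := Real.smoothTransition.nonneg _

lemma sg_le_one (k : ℕ) (x : ℝ) : sg k x ≤ 1 := Real.smoothTransition.le_one _

lemma sg_mono (k : ℕ) : Monotone (sg k) := by
  intro a b hab
  exact st_mono (by nlinarith [Real.exp_pos ((k:ℝ)^2)])

lemma eps_eq (N : ℕ) {x : ℝ} (h : x < N) : eps x = ∑ k ∈ Finset.range N, sg k x := by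
  apply tsum_eq_sum
  intro k hk
  apply sg_zero
  have : N ≤ k := by simpa using hk
  calc x ≤ (N:ℝ) := h.le
    _ ≤ k := by exact_mod_cast this
lemma eps_contDiff : ContDiff ℝ 2 eps := by
  rw [contDiff_iff_contDiffAt]
  intro x
  obtain ⟨N, hN⟩ := exists_nat_gt x
  have hsum : ContDiffAt ℝ 2 (fun y => ∑ k ∈ Finset.range N, sg k y) x := by
    apply ContDiff.contDiffAt
    exact ContDiff.sum fun k _ => sg_contDiff k
  apply hsum.congr_of_eventuallyEq
  have hmem : Iio (N:ℝ) ∈ nhds x := Iio_mem_nhds hN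
  filter_upwards [hmem] with y hy
  exact eps_eq N hy

lemma eps_mono : Monotone eps := by
  intro a b hab
  obtain ⟨N, hN⟩ := exists_nat_gt b
  rw [eps_eq N (lt_of_le_of_lt hab hN), eps_eq N hN]
  exact Finset.sum_le_sum fun k _ => sg_mono k hab

lemma eps_nonneg (x : ℝ) : 0 ≤ eps x := by
  obtain ⟨N, hN⟩ := exists_nat_gt x
  rw [eps_eq N hN]
  exact Finset.sum_nonneg fun k _ => sg_nonneg k x

lemma eps_nonpos {x : ℝ} (h : x ≤ 0) : eps x = 0 := by
  rw [eps]
  convert tsum_zero with k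
  exact sg_zero (h.trans (Nat.cast_nonneg k))

lemma eps_le {x : ℝ} (h : 0 ≤ x) : eps x ≤ x + 1 := by
  rw [eps_eq (⌊x⌋₊ + 1) (by push_cast; exact Nat.lt_floor_add_one x)]
  calc ∑ k ∈ Finset.range (⌊x⌋₊ + 1), sg k x ≤ ∑ k ∈ Finset.range (⌊x⌋₊ + 1), 1 :=
        Finset.sum_le_sum fun k _ => sg_le_one k x
    _ = (⌊x⌋₊ : ℝ) + 1 := by simp
    _ ≤ x + 1 := by linarith [Nat.floor_le h]

lemma eps_cont : Continuous eps := eps_contDiff.continuous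
noncomputable def F (x : ℝ) : ℝ := x ^ 2 / 2 + ∫ t in (0:ℝ)..x, eps t

lemma F_hasDerivAt (x : ℝ) : HasDerivAt F (x + eps x) x := by
  have h1 : HasDerivAt (fun y : ℝ => y ^ 2 / 2) x x := by
    have := (hasDerivAt_pow 2 x).div_const 2
    simpa using this
  have h2 : HasDerivAt (fun y : ℝ => ∫ t in (0:ℝ)..y, eps t) (eps x) x := by
    exact intervalIntegral.integral_hasDerivAt_right (eps_cont.intervalIntegrable _ _)
      eps_cont.aestronglyMeasurable.stronglyMeasurableAtFilter eps_cont.continuousAt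
  exact h1.add h2

lemma deriv_F : deriv F = fun x => x + eps x := funext fun x => (F_hasDerivAt x).deriv

lemma F_contDiff : ContDiff ℝ 2 F := by
  rw [show (2 : WithTop ℕ∞) = 1 + 1 from rfl, contDiff_succ_iff_deriv]
  refine ⟨fun x => (F_hasDerivAt x).differentiableAt, by simp, ?_⟩
  rw [deriv_F]
  exact contDiff_id.add (eps_contDiff.of_le (by norm_num))
lemma F_convex : ConvexOn ℝ Set.univ F := by
  apply MonotoneOn.convexOn_of_deriv convex_univ F_contDiff.continuous.continuousOn
    (fun x _ => (F_hasDerivAt x).differentiableAt.differentiableWithinAt)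
  rw [deriv_F]
  intro a _ b _ hab
  exact add_le_add hab (eps_mono hab)

lemma integral_eps_nonneg (x : ℝ) : 0 ≤ ∫ t in (0:ℝ)..x, eps t := by
  rcases le_or_gt 0 x with hx | hx
  · exact intervalIntegral.integral_nonneg hx (fun t _ => eps_nonneg t)
  · have : (∫ t in (0:ℝ)..x, eps t) = - ∫ t in x..(0:ℝ), eps t :=
      (intervalIntegral.integral_symm x 0)
    rw [this, neg_nonneg]
    have : (∫ t in x..(0:ℝ), eps t) = ∫ t in x..(0:ℝ), (0:ℝ) := by
      apply intervalIntegral.integral_congr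
      intro t ht
      rw [Set.uIcc_of_le hx.le] at ht
      exact eps_nonpos ht.2
    rw [this]; simp

lemma integral_eps_le {x : ℝ} (hx : 0 ≤ x) : (∫ t in (0:ℝ)..x, eps t) ≤ (x + 1) * x := by
  calc (∫ t in (0:ℝ)..x, eps t) ≤ ∫ t in (0:ℝ)..x, (x + 1) := by
        apply intervalIntegral.integral_mono_on hx (eps_cont.intervalIntegrable _ _)
          (intervalIntegrable_const)
        intro t ht
        calc eps t ≤ t + 1 := eps_le ht.1
          _ ≤ x + 1 := by linarith [ht.2]
    _ = (x + 1) * x := by simp; ring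

lemma integral_eps_nonpos {x : ℝ} (hx : x ≤ 0) : (∫ t in (0:ℝ)..x, eps t) ≤ 0 := by
  rcases eq_or_lt_of_le hx with rfl' | hx'
  · simp [rfl'.symm]
  · have : (∫ t in (0:ℝ)..x, eps t) = - ∫ t in x..(0:ℝ), eps t :=
      (intervalIntegral.integral_symm x 0)
    rw [this, neg_nonpos]
    exact intervalIntegral.integral_nonneg hx'.le (fun t _ => eps_nonneg t)

lemma F_bounds (x : ℝ) : x ^ 2 / 2 ≤ F x ∧ F x ≤ 2 * (x ^ 2 + 1) ∧ |deriv F x| ≤ 2 * (1 + |x|) := by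
  refine ⟨le_add_of_nonneg_right (integral_eps_nonneg x), ?_, ?_⟩
  · rcases le_or_gt 0 x with hx | hx
    · have := integral_eps_le hx
      have hxx : x ≤ x ^ 2 + 1 := by nlinarith
      unfold F; nlinarith
    · have := integral_eps_nonpos hx.le
      unfold F; nlinarith
  · rw [deriv_F]
    simp only
    rcases le_or_gt 0 x with hx | hx
    · rw [abs_of_nonneg (by linarith [eps_nonneg x])]
      rw [abs_of_nonneg hx]
      linarith [eps_le hx]
    · rw [eps_nonpos hx.le, add_zero, abs_of_neg hx]
      linarith [abs_nonneg x, neg_abs_le x]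
lemma eps_at_k {k : ℕ} (hk : 1 ≤ k) : eps (k : ℝ) = k := by
  rw [eps_eq (k + 1) (by exact_mod_cast lt_add_one (k:ℝ))]
  rw [Finset.sum_range_succ, sg_zero le_rfl, add_zero]
  rw [Finset.sum_congr rfl (fun j hj => sg_one (by
    have : j < k := Finset.mem_range.mp hj
    have : (j:ℝ) + 1 ≤ k := by exact_mod_cast this
    exact this))]
  simp

lemma eps_at_b {k : ℕ} (hk : 1 ≤ k) : eps ((k : ℝ) + Real.exp (-(k:ℝ)^2)) = k + 1 := by
  have hexp : Real.exp (-(k:ℝ)^2) < 1 := by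
    rw [Real.exp_lt_one_iff]
    have : (1:ℝ) ≤ k := by exact_mod_cast hk
    nlinarith
  have hexp0 : 0 < Real.exp (-(k:ℝ)^2) := Real.exp_pos _
  rw [eps_eq (k + 1) (by push_cast; linarith)]
  rw [Finset.sum_range_succ]
  have hlast : sg k ((k:ℝ) + Real.exp (-(k:ℝ)^2)) = 1 := by
    apply Real.smoothTransition.one_of_one_le
    rw [show (k:ℝ) + Real.exp (-(k:ℝ)^2) - k = Real.exp (-(k:ℝ)^2) by ring]
    rw [← Real.exp_add]
    simp
  rw [hlast]
  rw [Finset.sum_congr rfl (fun j hj => sg_one (by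
    have hj' : j < k := Finset.mem_range.mp hj
    have : (j:ℝ) + 1 ≤ k := by exact_mod_cast hj'
    linarith))]
  simp
lemma deriv2_F {k : ℕ} (hk : 1 ≤ k) :
    ∃ c : ℝ, (k:ℝ) < c ∧ c < (k:ℝ) + 1 ∧
      deriv (deriv F) c = 1 + Real.exp ((k:ℝ)^2) := by
  set e := Real.exp (-(k:ℝ)^2) with he
  have he0 : 0 < e := Real.exp_pos _
  have he1 : e < 1 := by
    rw [he, Real.exp_lt_one_iff]
    have : (1:ℝ) ≤ k := by exact_mod_cast hk
    nlinarith
  have hab : (k:ℝ) < (k:ℝ) + e := by linarith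
  have hd1 : ContDiff ℝ 1 (deriv F) := by
    rw [deriv_F]; exact contDiff_id.add (eps_contDiff.of_le (by norm_num))
  obtain ⟨c, hc, hcd⟩ := exists_deriv_eq_slope (deriv F) hab
    (hd1.continuous.continuousOn) (hd1.differentiable (by norm_num)).differentiableOn
  refine ⟨c, hc.1, by linarith [hc.2], ?_⟩
  rw [hcd, deriv_F]
  simp only
  rw [show ((k:ℝ) + e) = ((k:ℝ) + Real.exp (-(k:ℝ)^2)) from rfl]
  rw [eps_at_b hk, eps_at_k hk]
  have : ((k:ℝ) + Real.exp (-(k:ℝ)^2) + ((k:ℝ) + 1) - ((k:ℝ) + (k:ℝ))) = e + 1 := by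
    rw [← he]; ring
  rw [this]
  rw [show ((k:ℝ) + e - (k:ℝ)) = e by ring]
  rw [he, Real.exp_neg]
  field_simp

/-- There exists a convex `C²` function `f : ℝ → ℝ` with quadratic growth and at most
linear growth of `f'`, whose second derivative fails every polynomial growth bound. -/
theorem stmt7 : ∃ f : ℝ → ℝ, ContDiff ℝ 2 f ∧ ConvexOn ℝ Set.univ f ∧
    (∃ C : ℝ, 0 < C ∧ ∀ x : ℝ,
      x ^ 2 / 2 ≤ f x ∧ f x ≤ C * (x ^ 2 + 1) ∧ |deriv f x| ≤ C * (1 + |x|)) ∧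
    (∀ C' : ℝ, 0 < C' → ∀ s : ℝ, 0 ≤ s →
      ∃ x : ℝ, 0 < x ∧ C' * (1 + x ^ s) < |deriv (deriv f) x|) := by
  refine ⟨F, F_contDiff, F_convex, ⟨2, by norm_num, F_bounds⟩, ?_⟩
  intro C' hC' s hs
  obtain ⟨k, hk⟩ := exists_nat_gt (max (max 1 (s + 1)) (Real.log (2 * C') + 1))
  have hk1 : (1:ℝ) ≤ k := le_of_lt (lt_of_le_of_lt (le_max_of_le_left (le_max_left _ _)) hk)
  have hk1' : 1 ≤ k := by exact_mod_cast hk1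
  have hks : s + 1 ≤ k := le_of_lt (lt_of_le_of_lt (le_max_of_le_left (le_max_right _ _)) hk)
  have hkC : Real.log (2 * C') + 1 ≤ k := le_of_lt (lt_of_le_of_lt (le_max_right _ _) hk)
  obtain ⟨c, hc1, hc2, hcd⟩ := deriv2_F hk1'
  have hc0 : 0 < c := lt_of_le_of_lt (by positivity) hc1
  refine ⟨c, hc0, ?_⟩
  rw [hcd, abs_of_pos (by positivity)]
  have hcs : c ^ s ≤ ((k:ℝ) + 1) ^ s := Real.rpow_le_rpow hc0.le hc2.le hs
  have hlog1 : (0:ℝ) ≤ Real.log ((k:ℝ) + 1) := Real.log_nonneg (by linarith)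
  have hpow : ((k:ℝ) + 1) ^ s = Real.exp (s * Real.log ((k:ℝ) + 1)) := by
    rw [Real.rpow_def_of_pos (by linarith), mul_comm]
  have hlog2 : Real.log ((k:ℝ) + 1) ≤ (k:ℝ) := by
    have := Real.log_le_sub_one_of_pos (show (0:ℝ) < (k:ℝ) + 1 by linarith)
    linarith
  have h1 : C' * (1 + c ^ s) ≤ 2 * C' * Real.exp (s * Real.log ((k:ℝ) + 1)) := by
    have he1 : (1:ℝ) ≤ Real.exp (s * Real.log ((k:ℝ) + 1)) :=
      Real.one_le_exp (by positivity)
    nlinarith [hcs, hpow.symm.le, hpow.le]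
  have h2 : 2 * C' * Real.exp (s * Real.log ((k:ℝ) + 1)) =
      Real.exp (Real.log (2 * C') + s * Real.log ((k:ℝ) + 1)) := by
    rw [Real.exp_add, Real.exp_log (by linarith)]
  have h3 : Real.log (2 * C') + s * Real.log ((k:ℝ) + 1) ≤ (k:ℝ)^2 - 1 := by
    have hs2 : s * Real.log ((k:ℝ) + 1) ≤ s * (k:ℝ) := by
      exact mul_le_mul_of_nonneg_left hlog2 hs
    have hs3 : s * (k:ℝ) ≤ ((k:ℝ) - 1) * (k:ℝ) := by nlinarith
    nlinarith
  calc C' * (1 + c ^ s) ≤ Real.exp (Real.log (2 * C') + s * Real.log ((k:ℝ) + 1)) := by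
        rw [← h2]; exact h1
    _ ≤ Real.exp ((k:ℝ)^2 - 1) := Real.exp_le_exp.2 h3
    _ < Real.exp ((k:ℝ)^2) := Real.exp_lt_exp.2 (by linarith)
    _ < 1 + Real.exp ((k:ℝ)^2) := by linarith
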